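/- Let Ω be a simply connected open subset of D on which A(z)² − λ² does not vanish, and fix x₀ ∈ Ω. Then the two series w_even^±(x,h;x₀) = Σ_{n≥0} w_{2n}^±(x,h) and w_odd^±(x,h;x₀) = Σ_{n≥0} w_{2n−1}^±(x,h) converge absolutely in a neighborhood of x₀; moreover w_even^±(·,h;x₀) and w_odd^±(·,h;x₀) extend to analytic functions on all of Ω. -/

import Mathlib

/-!
STATEMENT 3 (Proposition 2.1).

On a simply connected open set `Ω ⊆ D` where `A² - λ²` does not vanish, with chosen
branches `sq = √(A² - λ²)` and `H = ((A+λ)/(A-λ))^{1/4}`, the exact WKB series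
`w_even^± = Σ w_{2n}^±`, `w_odd^± = Σ w_{2n-1}^±` — built from the recurrence
`w₋₁^± = 0`, `w₀^± = 1`, `(w_{2n}^±)' = c w_{2n-1}^±`,
`(d/dx ± 2z'/h) w_{2n-1}^± = c w_{2n-2}^±` with `c = H'/H` and
`w_n^±(x₀) = 0` for `n ≥ 1` — converge absolutely near `x₀`, and the sums extend to
analytic functions on all of `Ω`.
-/

open Complex Set Filter

noncomputable section

open intervalIntegral MeasureTheory

set_option maxHeartbeats 1000000


lemma norm_cexp_le (z : ℂ) : ‖Complex.exp z‖ ≤ Real.exp ‖z‖ := by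
  rw [Complex.norm_exp]
  exact Real.exp_le_exp.mpr (Complex.re_le_norm z)

set_option maxHeartbeats 1000000 in
lemma wkb_ball_est
    (Ω : Set ℂ) (hΩ : IsOpen Ω)
    (w : ℤ → ℂ → ℂ) (c sq : ℂ → ℂ) (s : ℂ) (hs : ‖s‖ = 1) (h : ℝ) (hh : 0 < h)
    (hc : ContinuousOn c Ω) (hsqc : ContinuousOn sq Ω)
    (hw0 : ∀ x, w 0 x = 1)
    (hrec : ∀ n : ℤ, 1 ≤ n → ∀ x ∈ Ω,
      HasDerivAt (w (2 * n)) (c x * w (2 * n - 1) x) x ∧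
      HasDerivAt (w (2 * n - 1))
        (c x * w (2 * n - 2) x - s * (2 * sq x / (h : ℂ)) * w (2 * n - 1) x) x)
    (y₀ : ℂ) (r : ℝ) (hr : 0 < r) (hball : Metric.closedBall y₀ r ⊆ Ω) :
    ∃ D : ℝ, 1 ≤ D ∧ ∀ C₀ : ℝ, 1 ≤ C₀ →
      (∀ m : ℕ, ‖w (m : ℤ) y₀‖ ≤ C₀ ^ m / (m.factorial : ℝ)) →
      ∀ x ∈ Metric.closedBall y₀ r, ∀ m : ℕ,
        ‖w (m : ℤ) x‖ ≤ (D * C₀) ^ m / (m.factorial : ℝ) := by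
  -- derivative facts by parity
  have hder_even : ∀ k : ℕ, ∀ x ∈ Ω,
      HasDerivAt (w ((2 * k + 2 : ℕ) : ℤ)) (c x * w ((2 * k + 1 : ℕ) : ℤ) x) x := by
    intro k x hx
    have h1 := (hrec ((k : ℤ) + 1) (by omega) x hx).1
    have e1 : (2 * ((k : ℤ) + 1)) = ((2 * k + 2 : ℕ) : ℤ) := by push_cast; ring
    rw [e1] at h1
    have e2 : ((2 * k + 2 : ℕ) : ℤ) - 1 = ((2 * k + 1 : ℕ) : ℤ) := by push_cast; ring
    rw [e2] at h1; exact h1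
  have hder_odd : ∀ k : ℕ, ∀ x ∈ Ω,
      HasDerivAt (w ((2 * k + 1 : ℕ) : ℤ))
        (c x * w ((2 * k : ℕ) : ℤ) x
          - s * (2 * sq x / (h : ℂ)) * w ((2 * k + 1 : ℕ) : ℤ) x) x := by
    intro k x hx
    have h1 := (hrec ((k : ℤ) + 1) (by omega) x hx).2
    have e1 : (2 * ((k : ℤ) + 1) - 1) = ((2 * k + 1 : ℕ) : ℤ) := by push_cast; ring
    have e2 : (2 * ((k : ℤ) + 1) - 2) = ((2 * k : ℕ) : ℤ) := by push_cast; ring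
    rw [e1, e2] at h1; exact h1
  have hdiff : ∀ m : ℕ, 1 ≤ m → ∀ x ∈ Ω, DifferentiableAt ℂ (w (m : ℤ)) x := by
    intro m hm x hx
    rcases Nat.even_or_odd m with ⟨k, hk⟩ | ⟨k, hk⟩
    · obtain ⟨j, rfl⟩ : ∃ j, m = 2 * j + 2 := ⟨k - 1, by omega⟩
      exact (hder_even j x hx).differentiableAt
    · obtain ⟨j, rfl⟩ : ∃ j, m = 2 * j + 1 := ⟨k, by omega⟩
      exact (hder_odd j x hx).differentiableAt
  have hcont : ∀ m : ℕ, ContinuousOn (fun x => w (m : ℤ) x) Ω := by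
    intro m
    rcases Nat.eq_zero_or_pos m with rfl | hm
    · have h0 : ContinuousOn (fun _ : ℂ => (1 : ℂ)) Ω := continuousOn_const
      exact h0.congr fun x _ => by simp [hw0]
    · exact fun x hx => ((hdiff m hm x hx).continuousAt).continuousWithinAt
  -- bounds on the closed ball
  obtain ⟨Mc₀, hMc₀⟩ :=
    (isCompact_closedBall y₀ r).exists_bound_of_continuousOn (hc.mono hball)
  obtain ⟨B₀, hB₀⟩ :=
    (isCompact_closedBall y₀ r).exists_bound_of_continuousOn (hsqc.mono hball)
  set Mc : ℝ := max Mc₀ 0 with hMcdef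
  set B : ℝ := max B₀ 0 with hBdef
  have hMc : ∀ y ∈ Metric.closedBall y₀ r, ‖c y‖ ≤ Mc :=
    fun y hy => (hMc₀ y hy).trans (le_max_left _ _)
  have hB : ∀ y ∈ Metric.closedBall y₀ r, ‖sq y‖ ≤ B :=
    fun y hy => (hB₀ y hy).trans (le_max_left _ _)
  have hMc0 : (0 : ℝ) ≤ Mc := le_max_right _ _
  have hB0 : (0 : ℝ) ≤ B := le_max_right _ _
  set M : ℝ := r * Mc + 1 with hMdef
  have hrMc : r * Mc ≤ M := by rw [hMdef]; linarith
  have hM1 : (1 : ℝ) ≤ M := by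
    have : 0 ≤ r * Mc := mul_nonneg hr.le hMc0
    rw [hMdef]; linarith
  have hM0 : (0 : ℝ) ≤ M := by linarith
  set Kh : ℝ := Real.exp (2 * r * B / h) with hKhdef
  have hKh1 : (1 : ℝ) ≤ Kh := by
    rw [hKhdef]
    apply Real.one_le_exp
    positivity
  set K : ℝ := Kh ^ 2 with hKdef
  have hK1 : (1 : ℝ) ≤ K := by nlinarith
  have hKhK : Kh ≤ K := by nlinarith
  refine ⟨K * (1 + M), by nlinarith, ?_⟩
  intro C₀ hC₀ hinit x hx
  set v : ℂ := x - y₀ with hvdef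
  have hv : ‖v‖ ≤ r := by
    rw [Metric.mem_closedBall, dist_eq_norm] at hx; exact hx
  set γ : ℝ → ℂ := fun t => y₀ + t • v with hγdef
  have hγball : ∀ t ∈ Icc (0 : ℝ) 1, γ t ∈ Metric.closedBall y₀ r := by
    intro t ht
    rw [Metric.mem_closedBall, dist_eq_norm]
    have e : γ t - y₀ = t • v := by simp [hγdef]
    rw [e, norm_smul]
    have h1 : ‖t‖ ≤ 1 := by rw [Real.norm_eq_abs, abs_le]; constructor <;> linarith [ht.1, ht.2]
    calc ‖t‖ * ‖v‖ ≤ 1 * r := mul_le_mul h1 hv (norm_nonneg _) zero_le_one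
      _ = r := one_mul r
  have hγΩ : ∀ t ∈ Icc (0 : ℝ) 1, γ t ∈ Ω := fun t ht => hball (hγball t ht)
  have hγcont : Continuous γ := continuous_const.add (continuous_id.smul continuous_const)
  set J : Set ℝ := γ ⁻¹' Ω with hJdef
  have hJopen : IsOpen J := hΩ.preimage hγcont
  have hIccJ : Icc (0 : ℝ) 1 ⊆ J := fun t ht => hγΩ t ht
  have hγderiv : ∀ t : ℝ, HasDerivAt γ v t := by
    intro t
    have h0 := ((hasDerivAt_id t).smul_const v).const_add y₀
    rw [one_smul] at h0; exact h0
  have hcγ : ∀ m : ℕ, ContinuousOn (fun τ => w (m : ℤ) (γ τ)) J :=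
    fun m => (hcont m).comp hγcont.continuousOn (fun τ hτ => hτ)
  have hccγ : ContinuousOn (fun τ => c (γ τ)) J :=
    hc.comp hγcont.continuousOn (fun τ hτ => hτ)
  have hsqγ : ContinuousOn (fun τ => sq (γ τ)) J :=
    hsqc.comp hγcont.continuousOn (fun τ hτ => hτ)
  have hγ0 : γ 0 = y₀ := by simp [hγdef]
  -- the polynomial integral
  have poly_int : ∀ m : ℕ, ∀ t' ∈ Icc (0 : ℝ) 1,
      ∫ τ in (0 : ℝ)..t', M * (C₀ + M * τ) ^ m
        = ((C₀ + M * t') ^ (m + 1) - C₀ ^ (m + 1)) / (m + 1) := by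
    intro m t' _
    have hF : ∀ τ ∈ uIcc (0 : ℝ) t',
        HasDerivAt (fun u => (C₀ + M * u) ^ (m + 1) / (m + 1)) (M * (C₀ + M * τ) ^ m) τ := by
      intro τ _
      have h1 : HasDerivAt (fun u : ℝ => C₀ + M * u) M τ := by
        simpa using ((hasDerivAt_id τ).const_mul M).const_add C₀
      have h2 := (h1.pow (m + 1)).div_const ((m : ℝ) + 1)
      refine h2.congr_deriv ?_
      have hm1 : ((m : ℝ) + 1) ≠ 0 := by positivity
      rw [Nat.add_sub_cancel, Nat.cast_add_one, div_eq_iff hm1]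
      ring
    have hcont' : IntervalIntegrable (fun τ => M * (C₀ + M * τ) ^ m) volume 0 t' :=
      (continuous_const.mul
        ((continuous_const.add (continuous_const.mul continuous_id)).pow m)).intervalIntegrable _ _
    rw [integral_eq_sub_of_hasDerivAt hF hcont']
    push_cast
    field_simp
    simp
  -- main induction
  have key : ∀ m : ℕ, ∀ t ∈ Icc (0 : ℝ) 1,
      ‖w (m : ℤ) (γ t)‖ ≤ K ^ m * (C₀ + M * t) ^ m / (m.factorial : ℝ) := by
    intro m
    induction m with
    | zero => intro t _; simp [hw0]
    | succ m ih =>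
      intro t ht
      have ht0 : (0 : ℝ) ≤ t := ht.1
      have ht1 : t ≤ 1 := ht.2
      have hsub : Icc (0 : ℝ) t ⊆ Icc (0 : ℝ) 1 := Icc_subset_Icc le_rfl ht1
      have huIcc : uIcc (0 : ℝ) t = Icc 0 t := uIcc_of_le ht0
      have hsubJ : Icc (0 : ℝ) t ⊆ J := hsub.trans hIccJ
      have hCM0 : ∀ τ ∈ Icc (0 : ℝ) t, (0 : ℝ) ≤ C₀ + M * τ := by
        intro τ hτ; nlinarith [hτ.1]
      have hP0 : (0 : ℝ) ≤ C₀ + M * t := by nlinarith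
      have hQP : C₀ ^ (m + 1) ≤ (C₀ + M * t) ^ (m + 1) :=
        pow_le_pow_left₀ (by linarith) (by nlinarith) _
      have hQ0 : (0 : ℝ) ≤ C₀ ^ (m + 1) := by positivity
      have hPnn : (0 : ℝ) ≤ (C₀ + M * t) ^ (m + 1) := pow_nonneg hP0 _
      have hKm : (1 : ℝ) ≤ K ^ m := by
        simpa using pow_le_pow_right₀ hK1 (Nat.zero_le m)
      have hKmm : K ^ m ≤ K ^ (m + 1) := pow_le_pow_right₀ hK1 (by omega)
      have hKK : K ≤ K ^ (m + 1) := by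
        simpa using pow_le_pow_right₀ hK1 (show 1 ≤ m + 1 by omega)
      have hfac_pos : (0 : ℝ) < (m.factorial : ℝ) := by exact_mod_cast m.factorial_pos
      have hfacs : (((m + 1).factorial : ℕ) : ℝ) = ((m : ℝ) + 1) * (m.factorial : ℝ) := by
        rw [Nat.factorial_succ]; push_cast; ring
      have hprev : ∀ τ ∈ Icc (0 : ℝ) t,
          ‖w (m : ℤ) (γ τ)‖ ≤ K ^ m * (C₀ + M * τ) ^ m / (m.factorial : ℝ) :=
        fun τ hτ => ih τ (hsub hτ)
      -- bound on the generic integrand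
      have hbnd : ∀ τ ∈ Icc (0 : ℝ) t, ‖v * (c (γ τ) * w (m : ℤ) (γ τ))‖ ≤
          M * (K ^ m * (C₀ + M * τ) ^ m / (m.factorial : ℝ)) := by
        intro τ hτ
        have hτ1 : τ ∈ Icc (0 : ℝ) 1 := hsub hτ
        have hcb : ‖c (γ τ)‖ ≤ Mc := hMc _ (hγball τ hτ1)
        have hwb := hprev τ hτ
        have hbpos : (0 : ℝ) ≤ K ^ m * (C₀ + M * τ) ^ m / (m.factorial : ℝ) := by
          have := hCM0 τ hτ; positivity
        calc ‖v * (c (γ τ) * w (m : ℤ) (γ τ))‖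
            = ‖v‖ * (‖c (γ τ)‖ * ‖w (m : ℤ) (γ τ)‖) := by rw [norm_mul, norm_mul]
          _ ≤ r * (Mc * (K ^ m * (C₀ + M * τ) ^ m / (m.factorial : ℝ))) := by
              apply mul_le_mul hv ?_ (by positivity) hr.le
              exact mul_le_mul hcb hwb (norm_nonneg _) hMc0
          _ = (r * Mc) * (K ^ m * (C₀ + M * τ) ^ m / (m.factorial : ℝ)) := by ring
          _ ≤ M * (K ^ m * (C₀ + M * τ) ^ m / (m.factorial : ℝ)) :=
              mul_le_mul_of_nonneg_right hrMc hbpos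
      have contb : Continuous fun τ : ℝ => M * (K ^ m * (C₀ + M * τ) ^ m / (m.factorial : ℝ)) := by
        apply continuous_const.mul
        apply Continuous.div_const
        exact continuous_const.mul
          ((continuous_const.add (continuous_const.mul continuous_id)).pow m)
      have hintb : IntervalIntegrable
          (fun τ => M * (K ^ m * (C₀ + M * τ) ^ m / (m.factorial : ℝ))) volume 0 t :=
        contb.intervalIntegrable _ _
      rcases Nat.even_or_odd (m + 1) with hpar | hpar
      · -- even case
        obtain ⟨k, hk⟩ : ∃ k, m + 1 = 2 * k + 2 := by
          obtain ⟨j, hj⟩ := hpar; exact ⟨j - 1, by omega⟩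
        have hmk : m = 2 * k + 1 := by omega
        have hD : ∀ τ ∈ Icc (0 : ℝ) 1, HasDerivAt (fun u => w ((m + 1 : ℕ) : ℤ) (γ u))
            (v * (c (γ τ) * w (m : ℤ) (γ τ))) τ := by
          intro τ hτ
          have h1 := hder_even k (γ τ) (hγΩ τ hτ)
          rw [← hk, ← hmk] at h1
          have h2 := h1.scomp τ (hγderiv τ)
          rw [smul_eq_mul] at h2; exact h2
        have hint : IntervalIntegrable (fun τ => v * (c (γ τ) * w (m : ℤ) (γ τ))) volume 0 t := by
          apply ContinuousOn.intervalIntegrable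
          rw [huIcc]
          exact continuousOn_const.mul ((hccγ.mono hsubJ).mul ((hcγ m).mono hsubJ))
        have ftc := integral_eq_sub_of_hasDerivAt (f := fun u => w ((m + 1 : ℕ) : ℤ) (γ u))
            (fun τ hτ => hD τ (hsub (huIcc ▸ hτ))) hint
        have ftc' : (∫ τ in (0 : ℝ)..t, v * (c (γ τ) * w (m : ℤ) (γ τ)))
            = w ((m + 1 : ℕ) : ℤ) (γ t) - w ((m + 1 : ℕ) : ℤ) (γ 0) := ftc
        rw [hγ0] at ftc'
        have hval : w ((m + 1 : ℕ) : ℤ) (γ t)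
            = w ((m + 1 : ℕ) : ℤ) y₀ + ∫ τ in (0 : ℝ)..t, v * (c (γ τ) * w (m : ℤ) (γ τ)) := by
          rw [ftc']; ring
        have hni : ‖∫ τ in (0 : ℝ)..t, v * (c (γ τ) * w (m : ℤ) (γ τ))‖ ≤
            ∫ τ in (0 : ℝ)..t, M * (K ^ m * (C₀ + M * τ) ^ m / (m.factorial : ℝ)) :=
          (intervalIntegral.norm_integral_le_integral_norm ht0).trans
            (intervalIntegral.integral_mono_on ht0 hint.norm hintb hbnd)
        have hib : (∫ τ in (0 : ℝ)..t, M * (K ^ m * (C₀ + M * τ) ^ m / (m.factorial : ℝ)))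
            = (K ^ m / (m.factorial : ℝ))
              * (((C₀ + M * t) ^ (m + 1) - C₀ ^ (m + 1)) / ((m : ℝ) + 1)) := by
          rw [← poly_int m t ht, ← intervalIntegral.integral_const_mul]
          apply intervalIntegral.integral_congr
          intro τ _; ring
        have hw1 : ‖w ((m + 1 : ℕ) : ℤ) (γ t)‖ ≤ C₀ ^ (m + 1) / (((m + 1).factorial : ℕ) : ℝ)
            + (K ^ m / (m.factorial : ℝ))
              * (((C₀ + M * t) ^ (m + 1) - C₀ ^ (m + 1)) / ((m : ℝ) + 1)) := by
          rw [hval]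
          refine (norm_add_le _ _).trans ?_
          exact add_le_add (hinit (m + 1)) (hni.trans_eq hib)
        refine hw1.trans ?_
        rw [hfacs]
        have e : C₀ ^ (m + 1) / (((m : ℝ) + 1) * (m.factorial : ℝ))
              + (K ^ m / (m.factorial : ℝ))
                * (((C₀ + M * t) ^ (m + 1) - C₀ ^ (m + 1)) / ((m : ℝ) + 1))
            = (C₀ ^ (m + 1) + K ^ m * ((C₀ + M * t) ^ (m + 1) - C₀ ^ (m + 1)))
                / (((m : ℝ) + 1) * (m.factorial : ℝ)) := by
          field_simp
        rw [e]
        gcongr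
        nlinarith [mul_le_mul_of_nonneg_right hKmm hPnn,
          mul_le_mul_of_nonneg_right hKm hQ0]
      · -- odd case
        obtain ⟨k, hk⟩ := hpar
        have hmk : m = 2 * k := by omega
        set ζ : ℝ → ℂ := fun u => ∫ τ in (0 : ℝ)..u, v * sq (γ τ) with hζdef
        have hζint : ∀ u ∈ Icc (0 : ℝ) 1,
            IntervalIntegrable (fun τ => v * sq (γ τ)) volume 0 u := by
          intro u hu
          apply ContinuousOn.intervalIntegrable
          rw [uIcc_of_le hu.1]
          exact continuousOn_const.mul
            (hsqγ.mono ((Icc_subset_Icc le_rfl hu.2).trans hIccJ))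
        have hζderiv : ∀ u ∈ Icc (0 : ℝ) 1, HasDerivAt ζ (v * sq (γ u)) u := by
          intro u hu
          have huJ : u ∈ J := hIccJ hu
          exact intervalIntegral.integral_hasDerivAt_right (hζint u hu)
            ((continuousOn_const.mul hsqγ).stronglyMeasurableAtFilter hJopen u huJ)
            ((continuousOn_const.mul hsqγ).continuousAt (hJopen.mem_nhds huJ))
        have hζcont : ContinuousOn ζ (Icc (0 : ℝ) 1) :=
          fun u hu => ((hζderiv u hu).continuousAt).continuousWithinAt
        set E : ℝ → ℂ := fun u => Complex.exp (s * (2 / (h : ℂ)) * ζ u) with hEdef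
        have hEderiv : ∀ u ∈ Icc (0 : ℝ) 1, HasDerivAt E
            (Complex.exp (s * (2 / (h : ℂ)) * ζ u) * (s * (2 / (h : ℂ)) * (v * sq (γ u)))) u :=
          fun u hu => ((hζderiv u hu).const_mul (s * (2 / (h : ℂ)))).cexp
        have hEcont : ContinuousOn E (Icc (0 : ℝ) 1) :=
          Complex.continuous_exp.comp_continuousOn (continuousOn_const.mul hζcont)
        have hWd : ∀ τ ∈ Icc (0 : ℝ) 1, HasDerivAt (fun u => w ((m + 1 : ℕ) : ℤ) (γ u))
            (v * (c (γ τ) * w (m : ℤ) (γ τ)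
              - s * (2 * sq (γ τ) / (h : ℂ)) * w ((m + 1 : ℕ) : ℤ) (γ τ))) τ := by
          intro τ hτ
          have h1 := hder_odd k (γ τ) (hγΩ τ hτ)
          rw [← hk, ← hmk] at h1
          have h2 := h1.scomp τ (hγderiv τ)
          rw [smul_eq_mul] at h2; exact h2
        have hgd : ∀ τ ∈ Icc (0 : ℝ) 1,
            HasDerivAt (fun u => E u * w ((m + 1 : ℕ) : ℤ) (γ u))
              (E τ * (v * (c (γ τ) * w (m : ℤ) (γ τ)))) τ := by
          intro τ hτ
          have h3 := (hEderiv τ hτ).mul (hWd τ hτ)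
          refine h3.congr_deriv ?_
          rw [show E τ = Complex.exp (s * (2 / (h : ℂ)) * ζ τ) from rfl]
          ring
        have hgint : IntervalIntegrable
            (fun τ => E τ * (v * (c (γ τ) * w (m : ℤ) (γ τ)))) volume 0 t := by
          apply ContinuousOn.intervalIntegrable
          rw [huIcc]
          exact (hEcont.mono hsub).mul
            (continuousOn_const.mul ((hccγ.mono hsubJ).mul ((hcγ m).mono hsubJ)))
        have ftc := integral_eq_sub_of_hasDerivAt
            (f := fun u => E u * w ((m + 1 : ℕ) : ℤ) (γ u))
            (fun τ hτ => hgd τ (hsub (huIcc ▸ hτ))) hgint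
        have hE0 : E 0 = 1 := by
          simp [hEdef, hζdef, intervalIntegral.integral_same]
        have ftc' : (∫ τ in (0 : ℝ)..t, E τ * (v * (c (γ τ) * w (m : ℤ) (γ τ))))
            = E t * w ((m + 1 : ℕ) : ℤ) (γ t) - E 0 * w ((m + 1 : ℕ) : ℤ) (γ 0) := ftc
        rw [hγ0, hE0, one_mul] at ftc'
        have hg3 : E t * w ((m + 1 : ℕ) : ℤ) (γ t) = w ((m + 1 : ℕ) : ℤ) y₀
            + ∫ τ in (0 : ℝ)..t, E τ * (v * (c (γ τ) * w (m : ℤ) (γ τ))) :=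
          sub_eq_iff_eq_add'.mp ftc'.symm
        have hEne : ∀ u, E u ≠ 0 := fun u => Complex.exp_ne_zero _
        -- bounds on E
        have hargbd : ∀ u ∈ Icc (0 : ℝ) 1, ‖s * (2 / (h : ℂ)) * ζ u‖ ≤ 2 * r * B / h := by
          intro u hu
          have hζb : ‖ζ u‖ ≤ r * B := by
            have hptw : ∀ τ ∈ Set.uIoc (0 : ℝ) u, ‖v * sq (γ τ)‖ ≤ r * B := by
              intro τ hτ
              rw [Set.uIoc_of_le hu.1] at hτ
              have hτ1 : τ ∈ Icc (0 : ℝ) 1 := ⟨hτ.1.le, hτ.2.trans hu.2⟩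
              rw [norm_mul]
              exact mul_le_mul hv (hB _ (hγball τ hτ1)) (norm_nonneg _) hr.le
            have h5 := intervalIntegral.norm_integral_le_of_norm_le_const hptw
            have h6 : |u - 0| ≤ 1 := by rw [sub_zero, _root_.abs_of_nonneg hu.1]; exact hu.2
            have h7 : (0 : ℝ) ≤ r * B := mul_nonneg hr.le hB0
            calc ‖ζ u‖ ≤ r * B * |u - 0| := h5
              _ ≤ r * B * 1 := by nlinarith
              _ = r * B := mul_one _
          have h2c : ‖(2 / (h : ℂ) : ℂ)‖ = 2 / h := by
            rw [norm_div]
            have : ‖((h : ℝ) : ℂ)‖ = h := by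
              rw [Complex.norm_real, Real.norm_eq_abs, abs_of_pos hh]
            rw [this]
            norm_num
          calc ‖s * (2 / (h : ℂ)) * ζ u‖ = ‖s‖ * ‖(2 / (h : ℂ) : ℂ)‖ * ‖ζ u‖ := by
                rw [norm_mul, norm_mul]
            _ = (2 / h) * ‖ζ u‖ := by rw [hs, h2c, one_mul]
            _ ≤ (2 / h) * (r * B) := by
                apply mul_le_mul_of_nonneg_left hζb (by positivity)
            _ = 2 * r * B / h := by ring
        have hEb : ∀ u ∈ Icc (0 : ℝ) 1, ‖E u‖ ≤ Kh := by
          intro u hu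
          refine (norm_cexp_le _).trans ?_
          rw [hKhdef]
          exact Real.exp_le_exp.mpr (hargbd u hu)
        have hEinvb : ‖(E t)⁻¹‖ ≤ Kh := by
          rw [hEdef]
          simp only
          rw [← Complex.exp_neg]
          refine (norm_cexp_le _).trans ?_
          rw [hKhdef]
          apply Real.exp_le_exp.mpr
          rw [norm_neg]
          exact hargbd t ht
        have hKh0 : (0 : ℝ) ≤ Kh := by linarith
        -- integrand bound
        have hbndE : ∀ τ ∈ Icc (0 : ℝ) t, ‖E τ * (v * (c (γ τ) * w (m : ℤ) (γ τ)))‖ ≤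
            Kh * (M * (K ^ m * (C₀ + M * τ) ^ m / (m.factorial : ℝ))) := by
          intro τ hτ
          rw [norm_mul]
          exact mul_le_mul (hEb τ (hsub hτ)) (hbnd τ hτ) (norm_nonneg _) hKh0
        have hintbE : IntervalIntegrable
            (fun τ => Kh * (M * (K ^ m * (C₀ + M * τ) ^ m / (m.factorial : ℝ)))) volume 0 t :=
          (continuous_const.mul contb).intervalIntegrable _ _
        have hni : ‖∫ τ in (0 : ℝ)..t, E τ * (v * (c (γ τ) * w (m : ℤ) (γ τ)))‖ ≤
            ∫ τ in (0 : ℝ)..t, Kh * (M * (K ^ m * (C₀ + M * τ) ^ m / (m.factorial : ℝ))) :=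
          (intervalIntegral.norm_integral_le_integral_norm ht0).trans
            (intervalIntegral.integral_mono_on ht0 hgint.norm hintbE hbndE)
        have hib : (∫ τ in (0 : ℝ)..t, Kh * (M * (K ^ m * (C₀ + M * τ) ^ m / (m.factorial : ℝ))))
            = Kh * (K ^ m / (m.factorial : ℝ))
              * (((C₀ + M * t) ^ (m + 1) - C₀ ^ (m + 1)) / ((m : ℝ) + 1)) := by
          rw [← poly_int m t ht, ← intervalIntegral.integral_const_mul]
          apply intervalIntegral.integral_congr
          intro τ _; ring
        have hwt : ‖w ((m + 1 : ℕ) : ℤ) (γ t)‖ ≤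
            Kh * (C₀ ^ (m + 1) / (((m + 1).factorial : ℕ) : ℝ)
              + Kh * (K ^ m / (m.factorial : ℝ))
                * (((C₀ + M * t) ^ (m + 1) - C₀ ^ (m + 1)) / ((m : ℝ) + 1))) := by
          have hwexpr : w ((m + 1 : ℕ) : ℤ) (γ t)
              = (E t)⁻¹ * (E t * w ((m + 1 : ℕ) : ℤ) (γ t)) := by
            rw [← mul_assoc, inv_mul_cancel₀ (hEne t), one_mul]
          rw [hwexpr, hg3, norm_mul]
          refine mul_le_mul hEinvb ?_ (norm_nonneg _) hKh0
          refine (norm_add_le _ _).trans ?_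
          exact add_le_add (hinit (m + 1)) (hni.trans_eq hib)
        refine hwt.trans ?_
        rw [hfacs]
        have e : Kh * (C₀ ^ (m + 1) / (((m : ℝ) + 1) * (m.factorial : ℝ))
              + Kh * (K ^ m / (m.factorial : ℝ))
                * (((C₀ + M * t) ^ (m + 1) - C₀ ^ (m + 1)) / ((m : ℝ) + 1)))
            = (Kh * C₀ ^ (m + 1) + Kh ^ 2 * K ^ m * ((C₀ + M * t) ^ (m + 1) - C₀ ^ (m + 1)))
                / (((m : ℝ) + 1) * (m.factorial : ℝ)) := by
          field_simp
        rw [e]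
        gcongr
        have hKKm : Kh ^ 2 * K ^ m = K ^ (m + 1) := by rw [hKdef, pow_succ]; ring
        nlinarith [mul_le_mul_of_nonneg_right (hKhK.trans hKK) hQ0]
  -- conclude
  intro m
  have h1 := key m 1 (by constructor <;> norm_num)
  have hγ1 : γ 1 = x := by simp [hγdef, hvdef]
  rw [hγ1] at h1
  refine h1.trans ?_
  calc K ^ m * (C₀ + M * 1) ^ m / (m.factorial : ℝ)
      = (K * (C₀ + M)) ^ m / (m.factorial : ℝ) := by rw [mul_pow]; ring_nf
    _ ≤ (K * (1 + M) * C₀) ^ m / (m.factorial : ℝ) := by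
        have hbase : K * (C₀ + M) ≤ K * (1 + M) * C₀ := by
          nlinarith [mul_nonneg (mul_nonneg (show (0:ℝ) ≤ K by linarith)
            (show (0:ℝ) ≤ M by linarith)) (show (0:ℝ) ≤ C₀ - 1 by linarith)]
        have hbnn : (0:ℝ) ≤ K * (C₀ + M) := by nlinarith
        have hfp : (0:ℝ) < (m.factorial : ℝ) := by exact_mod_cast m.factorial_pos
        exact div_le_div_of_nonneg_right (pow_le_pow_left₀ hbnn hbase m) hfp.le




/-- The exact WKB recurrence for the family `w_n^±` (`n ≥ -1`), with sign `s = ±1`,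
coefficient `c = H'/H`, phase derivative `z' = sq`, semiclassical parameter `h`, and
base point `x₀`. -/
def WKBRec (Ω : Set ℂ) (h : ℝ) (s : ℂ) (sq H : ℂ → ℂ) (x₀ : ℂ) (w : ℤ → ℂ → ℂ) : Prop :=
  (∀ x, w (-1) x = 0) ∧ (∀ x, w 0 x = 1) ∧
  (∀ n : ℤ, 1 ≤ n → ∀ x ∈ Ω,
      HasDerivAt (w (2 * n)) (deriv H x / H x * w (2 * n - 1) x) x ∧
      HasDerivAt (w (2 * n - 1))
        (deriv H x / H x * w (2 * n - 2) x - s * (2 * sq x / (h : ℂ)) * w (2 * n - 1) x) x) ∧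
  (∀ n : ℤ, 1 ≤ n → w n x₀ = 0)

/-- **Proposition 2.1.** Absolute convergence of `w_even^±` and `w_odd^±` near the base
point `x₀`, and analytic extension of the sums to all of `Ω`. -/
theorem wkb_series_converges
    (A : ℂ → ℂ) (lam : ℂ) (Ω : Set ℂ)
    (hΩopen : IsOpen Ω) (hΩsc : SimplyConnectedSpace Ω)
    (hA : AnalyticOnNhd ℂ A Ω)
    (hnv : ∀ x ∈ Ω, A x ^ 2 - lam ^ 2 ≠ 0)
    (sq H : ℂ → ℂ)
    (hsq_an : AnalyticOnNhd ℂ sq Ω) (hH_an : AnalyticOnNhd ℂ H Ω)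
    (hsq : ∀ x ∈ Ω, sq x ^ 2 = A x ^ 2 - lam ^ 2)
    (hH : ∀ x ∈ Ω, H x ≠ 0 ∧ (H x) ^ 4 = (A x + lam) / (A x - lam))
    (h : ℝ) (hh : 0 < h) (s : ℂ) (hs : s = 1 ∨ s = -1)
    (x₀ : ℂ) (hx₀ : x₀ ∈ Ω)
    (w : ℤ → ℂ → ℂ) (hw : WKBRec Ω h s sq H x₀ w) :
    ∃ U ∈ nhds x₀,
      (∀ x ∈ U, Summable (fun n : ℕ => ‖w (2 * (n : ℤ)) x‖) ∧
                Summable (fun n : ℕ => ‖w (2 * (n : ℤ) - 1) x‖)) ∧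
      ∃ we wo : ℂ → ℂ, AnalyticOnNhd ℂ we Ω ∧ AnalyticOnNhd ℂ wo Ω ∧
        ∀ x ∈ U ∩ Ω, we x = ∑' n : ℕ, w (2 * (n : ℤ)) x ∧
                     wo x = ∑' n : ℕ, w (2 * (n : ℤ) - 1) x := by
  obtain ⟨hwm1, hw0, hrec, hinit0⟩ := hw
  have hsnorm : ‖s‖ = 1 := by rcases hs with rfl | rfl <;> simp
  set c : ℂ → ℂ := fun x => deriv H x / H x with hcdef
  have hc_cont : ContinuousOn c Ω := by
    apply ContinuousOn.div hH_an.deriv.continuousOn hH_an.continuousOn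
    exact fun x hx => (hH x hx).1
  have hsq_cont : ContinuousOn sq Ω := hsq_an.continuousOn
  have hrec' : ∀ n : ℤ, 1 ≤ n → ∀ x ∈ Ω,
      HasDerivAt (w (2 * n)) (c x * w (2 * n - 1) x) x ∧
      HasDerivAt (w (2 * n - 1))
        (c x * w (2 * n - 2) x - s * (2 * sq x / (h : ℂ)) * w (2 * n - 1) x) x := hrec
  -- a radius function
  have hex : ∀ y ∈ Ω, ∃ ρ : ℝ, 0 < ρ ∧ Metric.closedBall y ρ ⊆ Ω := by
    intro y hy
    obtain ⟨ε, hε, hsub⟩ := Metric.isOpen_iff.mp hΩopen y hy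
    exact ⟨ε / 2, by linarith, (Metric.closedBall_subset_ball (by linarith)).trans hsub⟩
  choose! ρ hρpos hρsub using hex
  set P : ℂ → Prop :=
    fun y => ∃ C : ℝ, 1 ≤ C ∧ ∀ m : ℕ, ‖w (m : ℤ) y‖ ≤ C ^ m / (m.factorial : ℝ) with hPdef
  have hprop : ∀ y ∈ Ω, ∀ rr : ℝ, 0 < rr → Metric.closedBall y rr ⊆ Ω → P y →
      ∀ x ∈ Metric.closedBall y rr, P x := by
    rintro y hy rr hrr hsub ⟨C, hC, hbd⟩ x hx
    obtain ⟨D, hD, hest⟩ := wkb_ball_est Ω hΩopen w c sq s hsnorm h hh hc_cont hsq_cont hw0 hrec'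
      y rr hrr hsub
    exact ⟨D * C, by nlinarith, fun m => hest C hC hbd x hx m⟩
  have hPx₀ : P x₀ := by
    refine ⟨1, le_rfl, fun m => ?_⟩
    rcases Nat.eq_zero_or_pos m with rfl | hm
    · simp [hw0]
    · have hz : w (m : ℤ) x₀ = 0 := hinit0 m (by exact_mod_cast hm)
      rw [hz, norm_zero]
      positivity
  -- global bound via connectedness
  haveI := hΩsc
  have hpc : IsPathConnected Ω := isPathConnected_iff_pathConnectedSpace.mpr inferInstance
  have hpre : IsPreconnected Ω := hpc.isConnected.isPreconnected
  have hglobal : ∀ y ∈ Ω, P y := by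
    by_contra hcon
    push_neg at hcon
    obtain ⟨z₀, hz₀, hz₀P⟩ := hcon
    set U : Set ℂ := ⋃ y ∈ {y | y ∈ Ω ∧ P y}, Metric.ball y (ρ y) with hUdef
    set V : Set ℂ := ⋃ y ∈ {y | y ∈ Ω ∧ ¬ P y}, Metric.ball y (ρ y / 2) with hVdef
    have hUopen : IsOpen U := isOpen_biUnion fun _ _ => Metric.isOpen_ball
    have hVopen : IsOpen V := isOpen_biUnion fun _ _ => Metric.isOpen_ball
    have hcover : Ω ⊆ U ∪ V := by
      intro y hy
      by_cases hPy : P y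
      · exact Or.inl (mem_biUnion (show y ∈ {y | y ∈ Ω ∧ P y} from ⟨hy, hPy⟩)
          (Metric.mem_ball_self (hρpos y hy)))
      · exact Or.inr (mem_biUnion (show y ∈ {y | y ∈ Ω ∧ ¬ P y} from ⟨hy, hPy⟩)
          (Metric.mem_ball_self (by linarith [hρpos y hy])))
    have hUP : ∀ z ∈ Ω ∩ U, P z := by
      rintro z ⟨hzΩ, hzU⟩
      obtain ⟨y, hyS, hzball⟩ := mem_iUnion₂.mp hzU
      obtain ⟨hyΩ, hyP⟩ := hyS
      exact hprop y hyΩ (ρ y) (hρpos y hyΩ) (hρsub y hyΩ) hyP z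
        (Metric.ball_subset_closedBall hzball)
    have hVnP : ∀ z ∈ Ω ∩ V, ¬ P z := by
      rintro z ⟨hzΩ, hzV⟩ hPz
      obtain ⟨y, hyS, hzball⟩ := mem_iUnion₂.mp hzV
      obtain ⟨hyΩ, hyP⟩ := hyS
      apply hyP
      have hzy := Metric.mem_ball.mp hzball
      have h1 : Metric.closedBall z (ρ y / 2) ⊆ Ω := by
        intro u hu
        apply hρsub y hyΩ
        rw [Metric.mem_closedBall]
        rw [Metric.mem_closedBall] at hu
        calc dist u y ≤ dist u z + dist z y := dist_triangle _ _ _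
          _ ≤ ρ y / 2 + ρ y / 2 := add_le_add hu hzy.le
          _ = ρ y := by ring
      have hyz : y ∈ Metric.closedBall z (ρ y / 2) := by
        rw [Metric.mem_closedBall, dist_comm]
        exact hzy.le
      exact hprop z hzΩ (ρ y / 2) (by linarith [hρpos y hyΩ]) h1 hPz y hyz
    have hneU : (Ω ∩ U).Nonempty :=
      ⟨x₀, hx₀, mem_biUnion (show x₀ ∈ {y | y ∈ Ω ∧ P y} from ⟨hx₀, hPx₀⟩)
        (Metric.mem_ball_self (hρpos x₀ hx₀))⟩
    have hneV : (Ω ∩ V).Nonempty :=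
      ⟨z₀, hz₀, mem_biUnion (show z₀ ∈ {y | y ∈ Ω ∧ ¬ P y} from ⟨hz₀, hz₀P⟩)
        (Metric.mem_ball_self (by linarith [hρpos z₀ hz₀]))⟩
    obtain ⟨z, hzΩ, hzU, hzV⟩ := hpre U V hUopen hVopen hcover hneU hneV
    exact hVnP z ⟨hzΩ, hzV⟩ (hUP z ⟨hzΩ, hzU⟩)
  -- locally uniform factorial bounds
  have hloc : ∀ y ∈ Ω, ∃ E : ℝ, 1 ≤ E ∧ ∀ x ∈ Metric.closedBall y (ρ y), ∀ m : ℕ,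
      ‖w (m : ℤ) x‖ ≤ E ^ m / (m.factorial : ℝ) := by
    intro y hy
    obtain ⟨C, hC, hbd⟩ := hglobal y hy
    obtain ⟨D, hD, hest⟩ := wkb_ball_est Ω hΩopen w c sq s hsnorm h hh hc_cont hsq_cont hw0 hrec'
      y (ρ y) (hρpos y hy) (hρsub y hy)
    exact ⟨D * C, by nlinarith, fun x hx m => hest C hC hbd x hx m⟩
  -- translation of the bounds to the even/odd subsequences
  have hsummaux : ∀ E : ℝ, 1 ≤ E → ∀ x : ℂ,
      (∀ m : ℕ, ‖w (m : ℤ) x‖ ≤ E ^ m / (m.factorial : ℝ)) →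
      (∀ n : ℕ, ‖w (2 * (n : ℤ)) x‖ ≤ (E ^ 2) ^ n / (n.factorial : ℝ)) ∧
      (∀ n : ℕ, ‖w (2 * (n : ℤ) - 1) x‖ ≤ (E ^ 2) ^ n / (n.factorial : ℝ)) := by
    intro E hE x hbd
    have hE0 : (0 : ℝ) ≤ E := by linarith
    constructor
    · intro n
      have e : (2 * (n : ℤ)) = ((2 * n : ℕ) : ℤ) := by push_cast; ring
      rw [e]
      refine (hbd (2 * n)).trans ?_
      rw [pow_mul]
      have h3 : (0 : ℝ) < (n.factorial : ℝ) := by exact_mod_cast n.factorial_pos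
      exact div_le_div₀ (by positivity) le_rfl h3
        (by exact_mod_cast Nat.factorial_le (by omega))
    · intro n
      rcases Nat.eq_zero_or_pos n with rfl | hn
      · have e : (2 * ((0 : ℕ) : ℤ) - 1) = (-1 : ℤ) := by norm_num
        rw [e, hwm1, norm_zero]
        positivity
      · have e : (2 * (n : ℤ) - 1) = ((2 * n - 1 : ℕ) : ℤ) := by omega
        rw [e]
        refine (hbd (2 * n - 1)).trans ?_
        have h1 : E ^ (2 * n - 1) ≤ (E ^ 2) ^ n := by
          rw [← pow_mul]
          exact pow_le_pow_right₀ hE (by omega)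
        have h2 : (n.factorial : ℝ) ≤ ((2 * n - 1).factorial : ℝ) := by
          exact_mod_cast Nat.factorial_le (by omega)
        have h3 : (0 : ℝ) < (n.factorial : ℝ) := by exact_mod_cast n.factorial_pos
        exact div_le_div₀ (by positivity) h1 h3 h2
  -- differentiability of the individual terms
  have hdiff_even : ∀ n : ℕ, DifferentiableOn ℂ (fun x => w (2 * (n : ℤ)) x) Ω := by
    intro n
    rcases Nat.eq_zero_or_pos n with rfl | hn
    · have : DifferentiableOn ℂ (fun _ : ℂ => (1 : ℂ)) Ω := differentiableOn_const 1
      refine this.congr fun x _ => ?_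
      norm_num [hw0]
    · intro x hx
      exact ((hrec' n (by exact_mod_cast hn) x hx).1.differentiableAt).differentiableWithinAt
  have hdiff_odd : ∀ n : ℕ, DifferentiableOn ℂ (fun x => w (2 * (n : ℤ) - 1) x) Ω := by
    intro n
    rcases Nat.eq_zero_or_pos n with rfl | hn
    · have : DifferentiableOn ℂ (fun _ : ℂ => (0 : ℂ)) Ω := differentiableOn_const 0
      refine this.congr fun x _ => ?_
      norm_num [hwm1]
    · intro x hx
      exact ((hrec' n (by exact_mod_cast hn) x hx).2.differentiableAt).differentiableWithinAt
  have hsumE : ∀ E : ℝ, Summable (fun n : ℕ => (E ^ 2) ^ n / (n.factorial : ℝ)) :=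
    fun E => Real.summable_pow_div_factorial (E ^ 2)
  -- analyticity of the sums
  have hwe_diff : DifferentiableOn ℂ (fun x => ∑' n : ℕ, w (2 * (n : ℤ)) x) Ω := by
    intro y hy
    obtain ⟨E, hE, hEbd⟩ := hloc y hy
    have hdOn : DifferentiableOn ℂ (fun x => ∑' n : ℕ, w (2 * (n : ℤ)) x)
        (Metric.ball y (ρ y)) := by
      refine differentiableOn_tsum_of_summable_norm (hsumE E)
        (fun n => (hdiff_even n).mono (Metric.ball_subset_closedBall.trans (hρsub y hy)))
        Metric.isOpen_ball (fun n x hx => ?_)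
      exact (hsummaux E hE x (fun m => hEbd x (Metric.ball_subset_closedBall hx) m)).1 n
    exact (hdOn.differentiableAt
      (Metric.isOpen_ball.mem_nhds (Metric.mem_ball_self (hρpos y hy)))).differentiableWithinAt
  have hwo_diff : DifferentiableOn ℂ (fun x => ∑' n : ℕ, w (2 * (n : ℤ) - 1) x) Ω := by
    intro y hy
    obtain ⟨E, hE, hEbd⟩ := hloc y hy
    have hdOn : DifferentiableOn ℂ (fun x => ∑' n : ℕ, w (2 * (n : ℤ) - 1) x)
        (Metric.ball y (ρ y)) := by
      refine differentiableOn_tsum_of_summable_norm (hsumE E)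
        (fun n => (hdiff_odd n).mono (Metric.ball_subset_closedBall.trans (hρsub y hy)))
        Metric.isOpen_ball (fun n x hx => ?_)
      exact (hsummaux E hE x (fun m => hEbd x (Metric.ball_subset_closedBall hx) m)).2 n
    exact (hdOn.differentiableAt
      (Metric.isOpen_ball.mem_nhds (Metric.mem_ball_self (hρpos y hy)))).differentiableWithinAt
  refine ⟨Metric.ball x₀ (ρ x₀), Metric.ball_mem_nhds _ (hρpos x₀ hx₀), ?_,
    (fun x => ∑' n : ℕ, w (2 * (n : ℤ)) x), (fun x => ∑' n : ℕ, w (2 * (n : ℤ) - 1) x),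
    hwe_diff.analyticOnNhd hΩopen, hwo_diff.analyticOnNhd hΩopen,
    fun x _ => ⟨rfl, rfl⟩⟩
  intro x hx
  obtain ⟨E, hE, hEbd⟩ := hloc x₀ hx₀
  have hx' : x ∈ Metric.closedBall x₀ (ρ x₀) := Metric.ball_subset_closedBall hx
  have haux := hsummaux E hE x (fun m => hEbd x hx' m)
  constructor
  · exact Summable.of_nonneg_of_le (fun n => norm_nonneg _) haux.1 (hsumE E)
  · exact Summable.of_nonneg_of_le (fun n => norm_nonneg _) haux.2 (hsumE E)

end
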